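/- Let V be a finite-dimensional normed complex vector space and φ a linear endomorphism of V. Suppose there exist constants C > 0 and r > 0 such that the operator norm satisfies ‖φ^m‖ ≤ C · r^m for every integer m ≥ 1. Then for every complex number λ with |λ| = r, the generalized eigenspace of φ for λ equals the eigenspace of φ for λ; in particular ker((φ − λ·id)^2) = ker(φ − λ·id), i.e., φ has no Jordan block of size ≥ 2 for any eigenvalue of modulus r. -/

import Mathlib

/-- If `ker (g^2) = ker g`, then `ker (g^k) = ker g` for all `k ≥ 1`. -/
lemma ker_pow_stab {R M : Type*} [CommRing R] [AddCommGroup M] [Module R M]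
    (g : Module.End R M) (h : LinearMap.ker (g ^ 2) = LinearMap.ker g) :
    ∀ k : ℕ, LinearMap.ker (g ^ (k + 1)) = LinearMap.ker g := by
  intro k
  induction k with
  | zero => simp
  | succ n ih =>
    apply le_antisymm
    · intro x hx
      have hgx : g x ∈ LinearMap.ker (g ^ (n + 1)) := by
        rw [LinearMap.mem_ker] at hx ⊢
        have : (g ^ (n + 1)) (g x) = (g ^ (n + 2)) x := by
          rw [← Module.End.mul_apply, ← pow_succ]
        rw [this]; exact hx
      rw [ih, LinearMap.mem_ker] at hgx
      have : x ∈ LinearMap.ker (g ^ 2) := by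
        rw [LinearMap.mem_ker, pow_two, Module.End.mul_apply]; exact hgx
      rwa [h] at this
    · intro x hx
      rw [LinearMap.mem_ker] at hx ⊢
      rw [pow_succ, Module.End.mul_apply, hx, map_zero]

theorem stmt5 {V : Type*} [NormedAddCommGroup V] [NormedSpace ℂ V] [FiniteDimensional ℂ V]
    (φ : V →L[ℂ] V) (C r : ℝ) (hC : 0 < C) (hr : 0 < r)
    (hbound : ∀ m : ℕ, 1 ≤ m → ‖φ ^ m‖ ≤ C * r ^ m) :
    ∀ μ : ℂ, ‖μ‖ = r →
      (Module.End.genEigenspace (φ : V →ₗ[ℂ] V) μ ⊤ =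
        Module.End.eigenspace (φ : V →ₗ[ℂ] V) μ) ∧
      LinearMap.ker (((φ : V →ₗ[ℂ] V) - μ • 1) ^ 2) =
        LinearMap.ker ((φ : V →ₗ[ℂ] V) - μ • 1) := by
  intro μ hμ
  set f : V →ₗ[ℂ] V := (φ : V →ₗ[ℂ] V)
  set g : V →ₗ[ℂ] V := f - μ • 1 with hg
  -- key step: ker (g^2) = ker g
  have key : LinearMap.ker (g ^ 2) = LinearMap.ker g := by
    apply le_antisymm
    · intro v hv
      rw [LinearMap.mem_ker] at hv ⊢
      set w : V := g v with hw
      -- φ w = μ • w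
      have hgw : g w = 0 := by
        have h2 : g (g v) = (g ^ 2) v := by rw [pow_two, Module.End.mul_apply]
        rw [hw, h2, hv]
      have hφw : f w = μ • w := by
        have := hgw
        simp only [hg, LinearMap.sub_apply, LinearMap.smul_apply, Module.End.one_apply,
          sub_eq_zero] at this
        exact this
      have hφv : f v = μ • v + w := by
        simp only [hw, hg, LinearMap.sub_apply, LinearMap.smul_apply, Module.End.one_apply]
        abel
      -- formula for powers
      have pow_formula : ∀ m : ℕ, (f ^ (m + 1)) v = μ ^ (m + 1) • v + ((m + 1 : ℂ) * μ ^ m) • w := by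
        intro m
        induction m with
        | zero => simpa using hφv
        | succ n ih =>
          have h : (f ^ (n + 1 + 1)) v = f ((f ^ (n + 1)) v) := by
            rw [← Module.End.mul_apply, ← pow_succ']
          rw [h, ih, map_add, map_smul, map_smul, hφv, hφw]
          push_cast
          module
      -- norm bound
      by_contra hw0
      have hwpos : 0 < ‖w‖ := by
        rw [norm_pos_iff]; exact hw0
      have hbnd : ∀ m : ℕ, (m + 1 : ℝ) * ‖w‖ ≤ (C + 1) * r * ‖v‖ := by
        intro m
        have h1 : ‖(f ^ (m + 1)) v‖ ≤ C * r ^ (m + 1) * ‖v‖ := by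
          have hcoe : (f ^ (m + 1)) v = (φ ^ (m + 1)) v := by
            have : f ^ (m + 1) = ((φ ^ (m + 1) : V →L[ℂ] V) : V →ₗ[ℂ] V) :=
              (map_pow (ContinuousLinearMap.toLinearMapRingHom (R₁ := ℂ) (M₁ := V)) φ (m + 1)).symm
            rw [this]; rfl
          rw [hcoe]
          calc ‖(φ ^ (m + 1)) v‖ ≤ ‖φ ^ (m + 1)‖ * ‖v‖ := (φ ^ (m + 1)).le_opNorm v
            _ ≤ C * r ^ (m + 1) * ‖v‖ := by
                apply mul_le_mul_of_nonneg_right (hbound (m + 1) (by omega)) (norm_nonneg v)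
        have h2 : ‖((m + 1 : ℂ) * μ ^ m) • w‖ ≤ ‖(f ^ (m + 1)) v‖ + ‖μ ^ (m + 1) • v‖ := by
          rw [pow_formula m]
          calc ‖(((m : ℂ) + 1) * μ ^ m) • w‖
              = ‖(μ ^ (m + 1) • v + (((m : ℂ) + 1) * μ ^ m) • w) - μ ^ (m + 1) • v‖ := by
                rw [add_sub_cancel_left]
            _ ≤ _ := norm_sub_le _ _
        have hnw : ‖((m + 1 : ℂ) * μ ^ m) • w‖ = (m + 1 : ℝ) * r ^ m * ‖w‖ := by
          rw [norm_smul, norm_mul, norm_pow]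
          have hc : ‖((m : ℂ) + 1)‖ = (m : ℝ) + 1 := by
            rw [show ((m : ℂ) + 1) = (((m + 1 : ℕ) : ℂ)) by push_cast; ring,
              Complex.norm_natCast]
            push_cast; ring
          simp only [hμ, hc]
        have hnv : ‖μ ^ (m + 1) • v‖ = r ^ (m + 1) * ‖v‖ := by
          rw [norm_smul, norm_pow]
          simp only [hμ]
        have h3 : (m + 1 : ℝ) * r ^ m * ‖w‖ ≤ (C + 1) * r ^ (m + 1) * ‖v‖ := by
          rw [← hnw]
          have h4 := h2.trans (by rw [hnv]; nlinarith [norm_nonneg v] :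
            ‖(f ^ (m + 1)) v‖ + ‖μ ^ (m + 1) • v‖ ≤ (C + 1) * r ^ (m + 1) * ‖v‖)
          exact h4
        have hrm : (0 : ℝ) < r ^ m := pow_pos hr m
        have : (m + 1 : ℝ) * r ^ m * ‖w‖ ≤ (C + 1) * r * ‖v‖ * r ^ m := by
          rw [pow_succ] at h3
          nlinarith
        nlinarith
      obtain ⟨n, hn⟩ := exists_nat_gt ((C + 1) * r * ‖v‖ / ‖w‖)
      have := hbnd n
      have hn' : (C + 1) * r * ‖v‖ < (n : ℝ) * ‖w‖ := by
        rw [div_lt_iff₀ hwpos] at hn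
        exact hn
      nlinarith [hwpos]
    · intro x hx
      rw [LinearMap.mem_ker] at hx ⊢
      rw [pow_two, Module.End.mul_apply, hx, map_zero]
  refine ⟨?_, key⟩
  -- generalized eigenspace equals eigenspace
  ext x
  rw [Module.End.mem_genEigenspace_top]
  constructor
  · rintro ⟨k, hk⟩
    rcases k with _ | k
    · simp only [pow_zero, LinearMap.mem_ker, Module.End.one_apply] at hk
      simp [Module.End.eigenspace, hk]
    · rw [ker_pow_stab g key k] at hk
      rwa [Module.End.eigenspace, Module.End.genEigenspace_one]
  · intro hx
    rw [Module.End.eigenspace, Module.End.genEigenspace_one] at hx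
    exact ⟨1, by simpa using hx⟩
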